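/- arXiv:2008.10964 — 5 statements merged into one kernel-verified Lean document; each statement's English description precedes it below -/
import Mathlib

section
/- Let G be a torsion-free commutative-transitive group, let H ⪯ G be an elementarily embedded subgroup, and let h ∈ H with h ≠ 1. Then (1) Z_H(h) = Z_G(h) ∩ H, so Z_H(h) ≤ Z_G(h); and (2) if Z_H(h) has finite index in Z_G(h), then Z_H(h) = Z_G(h). -/
open FirstOrder
open scoped commutatorElement

/-- Function symbols of the first-order language of groups:
one constant (identity), one unary symbol (inversion), one binary symbol (multiplication). -/
def groupFunctions : ℕ → Type
  | 0 => Unit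
  | 1 => Unit
  | 2 => Unit
  | _ => Empty

/-- The first-order language of groups. -/
def groupLang : FirstOrder.Language where
  Functions := groupFunctions
  Relations := fun _ => Empty

/-- Any group is a structure for the language of groups, with the obvious interpretations. -/
instance groupLangStructure (G : Type*) [Group G] : groupLang.Structure G where
  funMap := fun {n} f v =>
    match n, f, v with
    | 0, _, _ => (1 : G)
    | 1, _, v => (v 0)⁻¹
    | 2, _, v => v 0 * v 1
    | _ + 3, f, _ => f.elim
  RelMap := fun {_} r _ => r.elim

/-- A subgroup `H ≤ G` is elementarily embedded if every first-order formula with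
parameters from `H` holds in `H` iff it holds in `G`. -/
def ElemEmbedded {G : Type*} [Group G] (H : Subgroup G) : Prop :=
  ∀ (n : ℕ) (φ : groupLang.Formula (Fin n)) (v : Fin n → H),
    φ.Realize v ↔ φ.Realize (fun i => (v i : G))

/-- The identity term. -/
def oneT {α : Type} : groupLang.Term α :=
  Language.Term.func (l := 0) (() : groupLang.Functions 0) ![]

/-- The product of two terms. -/
def mulT {α : Type} (t s : groupLang.Term α) : groupLang.Term α :=
  Language.Term.func (l := 2) (() : groupLang.Functions 2) ![t, s]

/-- The term `x ^ n` where `x` is the bound variable. -/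
def powT (n : ℕ) : groupLang.Term (Fin 1 ⊕ Fin 1) :=
  Nat.rec oneT (fun _ t => mulT t (Language.Term.var (Sum.inr 0))) n

lemma realize_powT {M : Type*} [Group M] (f : Fin 1 ⊕ Fin 1 → M) (n : ℕ) :
    Language.Term.realize f (powT n) = (f (Sum.inr 0)) ^ n := by
  induction n with
  | zero =>
      simp [powT, oneT, Language.Term.realize]
      rfl
  | succ k ih =>
      simp only [powT, mulT, Language.Term.realize, pow_succ] at *
      rw [← ih]
      rfl

/-- The formula `∃ x, x ^ n = a`. -/
def powEqF (n : ℕ) : groupLang.Formula (Fin 1) :=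
  Language.BoundedFormula.ex
    (Language.Term.bdEqual (powT n) (Language.Term.var (Sum.inl 0)))

lemma realize_powEqF {M : Type*} [Group M] (n : ℕ) (v : Fin 1 → M) :
    (powEqF n).Realize v ↔ ∃ x : M, x ^ n = v 0 := by
  simp only [powEqF, Language.Formula.Realize, Language.BoundedFormula.realize_ex,
    Language.BoundedFormula.realize_bdEqual, Language.Term.realize_var, realize_powT]
  constructor
  · rintro ⟨a, ha⟩
    exact ⟨a, by simpa [Fin.snoc] using ha⟩
  · rintro ⟨x, hx⟩
    exact ⟨x, by simpa [Fin.snoc] using hx⟩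

/-- Let `G` be a torsion-free commutative-transitive group, `H ⪯ G` elementarily
embedded, and `h ∈ H` nontrivial. Then (1) `Z_H(h) = Z_G(h) ∩ H`, and
(2) if `Z_H(h)` has finite index in `Z_G(h)` then `Z_H(h) = Z_G(h)`. -/
theorem centralizer_elemEmbedded {G : Type*} [Group G]
    (htf : ∀ g : G, g ≠ 1 → ¬IsOfFinOrder g)
    (hct : ∀ x y z : G, y ≠ 1 → ⁅x, y⁆ = 1 → ⁅y, z⁆ = 1 → ⁅x, z⁆ = 1)
    (H : Subgroup G) (hHG : ElemEmbedded H)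
    (h : G) (hhH : h ∈ H) (hne : h ≠ 1) :
    Subgroup.map H.subtype (Subgroup.centralizer {(⟨h, hhH⟩ : H)})
        = Subgroup.centralizer {h} ⊓ H ∧
    ((Subgroup.map H.subtype (Subgroup.centralizer {(⟨h, hhH⟩ : H)})).relIndex
        (Subgroup.centralizer {h}) ≠ 0 →
      Subgroup.map H.subtype (Subgroup.centralizer {(⟨h, hhH⟩ : H)})
        = Subgroup.centralizer {h}) := by
  have part1 : Subgroup.map H.subtype (Subgroup.centralizer {(⟨h, hhH⟩ : H)})
      = Subgroup.centralizer {h} ⊓ H := by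
    ext x
    simp only [Subgroup.mem_map, Subgroup.mem_inf, Subgroup.mem_centralizer_iff,
      Set.mem_singleton_iff, forall_eq, Subgroup.coe_subtype]
    constructor
    · rintro ⟨y, hy, rfl⟩
      exact ⟨congrArg Subtype.val hy, y.2⟩
    · rintro ⟨hx1, hx2⟩
      exact ⟨⟨x, hx2⟩, Subtype.ext hx1, rfl⟩
  refine ⟨part1, fun hfin => ?_⟩
  set C := Subgroup.centralizer {h} with hC
  set K := Subgroup.map H.subtype (Subgroup.centralizer {(⟨h, hhH⟩ : H)}) with hK
  refine le_antisymm (part1.le.trans inf_le_left) (fun g hg => ?_)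
  by_cases hg1 : g = 1
  · subst hg1; exact one_mem _
  -- C is abelian
  have hcomm : ∀ a b : G, a ∈ C → b ∈ C → a * b = b * a := by
    intro a b ha hb
    have ha' : ⁅a, h⁆ = 1 := commutatorElement_eq_one_iff_commute.2
      ((Subgroup.mem_centralizer_iff.1 ha h rfl).symm)
    have hb' : ⁅h, b⁆ = 1 := commutatorElement_eq_one_iff_commute.2
      (Subgroup.mem_centralizer_iff.1 hb h rfl)
    exact commutatorElement_eq_one_iff_commute.1 (hct a h b hne ha' hb')
  have nK : (K.subgroupOf C).Normal := by
    constructor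
    intro x hx c
    have hcx : c * x * c⁻¹ = x := by
      have := hcomm c x c.2 x.2
      ext
      push_cast
      rw [this]
      group
    rwa [hcx]
  haveI := nK
  haveI : (K.subgroupOf C).FiniteIndex := ⟨hfin⟩
  set n := (K.subgroupOf C).index with hn
  have hn0 : n ≠ 0 := hfin
  have hpow : g ^ n ∈ K := by
    have := Subgroup.pow_index_mem (K.subgroupOf C) (⟨g, hg⟩ : C)
    rw [Subgroup.mem_subgroupOf] at this
    simpa using this
  have hgnH : g ^ n ∈ H := by
    rw [part1] at hpow
    exact hpow.2
  have hgn1 : g ^ n ≠ 1 := fun e =>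
    htf g hg1 (isOfFinOrder_iff_pow_eq_one.2 ⟨n, Nat.pos_of_ne_zero hn0, e⟩)
  -- elementary embedding: g^n has an n-th root in H
  have hG : (powEqF n).Realize (fun _ => g ^ n : Fin 1 → G) :=
    (realize_powEqF n _).2 ⟨g, rfl⟩
  have hHside : (powEqF n).Realize (fun _ => (⟨g ^ n, hgnH⟩ : H) : Fin 1 → H) :=
    (hHG 1 (powEqF n) _).2 hG
  obtain ⟨x, hx⟩ := (realize_powEqF n _).1 hHside
  have hx' : (x : G) ^ n = g ^ n := by
    have := congrArg (Subtype.val : H → G) hx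
    push_cast at this
    exact this
  have c1 : ⁅(x : G), g ^ n⁆ = 1 := by
    rw [← hx']
    exact commutatorElement_eq_one_iff_commute.2 ((Commute.refl (x : G)).pow_right n)
  have c2 : ⁅g ^ n, g⁆ = 1 :=
    commutatorElement_eq_one_iff_commute.2 ((Commute.refl g).pow_left n)
  have hcom : Commute (x : G) g :=
    commutatorElement_eq_one_iff_commute.1 (hct (x : G) (g ^ n) g hgn1 c1 c2)
  have hxg1 : ((x : G) * g⁻¹) ^ n = 1 := by
    rw [hcom.inv_right.mul_pow, inv_pow, hx']
    group
  have hxg : (x : G) * g⁻¹ = 1 := by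
    by_contra hne'
    exact htf _ hne' (isOfFinOrder_iff_pow_eq_one.2 ⟨n, Nat.pos_of_ne_zero hn0, hxg1⟩)
  have hgH : g ∈ H := by
    have : (x : G) = g := by
      rw [← mul_inv_eq_one]
      exact hxg
    exact this ▸ x.2
  rw [part1]
  exact ⟨hg, hgH⟩
end

section
/- For every integer r ≥ 1 there exists a first-order formula Z_r(x) with one free variable in the language of groups such that for every torsion-free commutative-transitive group G in which every abelian subgroup is finitely generated, and for every g ∈ G: G ⊨ Z_r(g) if and only if g ≠ 1 and the centralizer Z_G(g) is a free abelian group of rank r (i.e., isomorphic to ℤʳ). The formula Z_r depends only on r, not on G. -/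
open FirstOrder
open scoped commutatorElement

/-- A monoid is torsion-free if no nontrivial element has finite order
(the definition of `Monoid.IsTorsionFree` in the older Mathlib). -/
def Monoid.IsTorsionFree (G : Type*) [Monoid G] : Prop :=
  ∀ g : G, g ≠ 1 → ¬IsOfFinOrder g

namespace ZFormAux
open FirstOrder.Language

/-- A finitely generated torsion-free commutative group is free abelian of finite rank. -/
lemma fg_tf_comm_iso (H : Type*) [CommGroup H] [Group.FG H] (htf : Monoid.IsTorsionFree H) :
    ∃ n : ℕ, Nonempty (H ≃* Multiplicative (Fin n → ℤ)) := by
  haveI : AddGroup.FG (Additive H) := inferInstance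
  haveI : Module.Finite ℤ (Additive H) := Module.Finite.iff_addGroup_fg.2 ‹_›
  haveI : NoZeroSMulDivisors ℤ (Additive H) := by
    refine ⟨fun {n a} h => ?_⟩
    by_contra hne
    push_neg at hne
    have hfin : IsOfFinAddOrder a := isOfFinAddOrder_iff_zsmul_eq_zero.2 ⟨n, hne.1, h⟩
    exact htf a.toMul (by simpa using hne.2) (by rwa [← isOfFinAddOrder_ofMul_iff (x := a.toMul)])
  haveI : Module.Free ℤ (Additive H) := Module.free_of_finite_type_torsion_free'
  let ι := Module.Free.ChooseBasisIndex ℤ (Additive H)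
  haveI : Fintype ι := inferInstance
  let b : Module.Basis ι ℤ (Additive H) := Module.Free.chooseBasis ℤ (Additive H)
  refine ⟨Fintype.card ι, ⟨?_⟩⟩
  have e1 : Additive H ≃ₗ[ℤ] (ι → ℤ) := b.equivFun
  have e2 : (ι → ℤ) ≃ₗ[ℤ] (Fin (Fintype.card ι) → ℤ) :=
    LinearEquiv.funCongrLeft ℤ ℤ (Fintype.equivFin ι).symm
  have e : Additive H ≃+ (Fin (Fintype.card ι) → ℤ) := (e1.trans e2).toAddEquiv
  exact
    { toFun := fun h => Multiplicative.ofAdd (e (Additive.ofMul h))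
      invFun := fun v => (e.symm v.toAdd).toMul
      left_inv := fun h => by simp
      right_inv := fun v => by simp
      map_mul' := fun x y => by
        simp [← ofAdd_add, map_add e] }

section Count
variable {A : Type*} [Group A] {n : ℕ} (e : A ≃* Multiplicative (Fin n → ℤ))

/-- reduction mod 2 of the coordinates -/
def pi2 (a : A) : Fin n → ZMod 2 := fun j => (((e a).toAdd j : ℤ) : ZMod 2)

lemma pi2_mul (a b : A) : pi2 e (a * b) = pi2 e a + pi2 e b := by
  funext j
  simp [pi2, map_mul]

lemma pi2_inv (a : A) : pi2 e a⁻¹ = - pi2 e a := by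
  funext j
  simp [pi2, map_inv]

lemma sq_iff (a : A) : (∃ w : A, w * w = a) ↔ pi2 e a = 0 := by
  constructor
  · rintro ⟨w, rfl⟩
    funext j
    have : (e (w * w)).toAdd j = (e w).toAdd j + (e w).toAdd j := by
      rw [map_mul]; rfl
    simp only [pi2, this, Int.cast_add, Pi.zero_apply]
    exact CharTwo.add_self_eq_zero _
  · intro h
    have hdvd : ∀ j, (2 : ℤ) ∣ (e a).toAdd j := by
      intro j
      have := congrFun h j
      simpa [pi2, ZMod.intCast_zmod_eq_zero_iff_dvd] using this
    choose k hk using hdvd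
    refine ⟨e.symm (Multiplicative.ofAdd k), ?_⟩
    apply e.injective
    rw [map_mul, MulEquiv.apply_symm_apply]
    apply Multiplicative.toAdd.injective
    funext j
    show k j + k j = (e a).toAdd j
    rw [hk j]; ring

lemma pi2_surj : Function.Surjective (pi2 e) := by
  intro v
  refine ⟨e.symm (Multiplicative.ofAdd fun j => ((v j).val : ℤ)), ?_⟩
  funext j
  simp [pi2, MulEquiv.apply_symm_apply]

lemma cond_iff (e : A ≃* Multiplicative (Fin n → ℤ)) (r : ℕ) :
    (∃ f : Fin (2^r) → A, (∀ i j, i ≠ j → ∀ w : A, w * w ≠ f i * (f j)⁻¹) ∧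
      ∀ y : A, ∃ i, ∃ w : A, w * w = y * (f i)⁻¹) ↔ n = r := by
  have key : ∀ a b : A, (∃ w : A, w * w = a * b⁻¹) ↔ pi2 e a = pi2 e b := by
    intro a b
    rw [sq_iff e, pi2_mul, pi2_inv]
    constructor
    · intro h; have := congrArg (· + pi2 e b) h; simpa using this
    · intro h; rw [h]; simp
  constructor
  · rintro ⟨f, hdist, hcover⟩
    have hinj : Function.Injective (pi2 e ∘ f) := by
      intro i j hij
      by_contra hne
      exact hdist i j hne ((key (f i) (f j)).2 hij).choose (((key (f i) (f j)).2 hij).choose_spec)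
    have hsurj : Function.Surjective (pi2 e ∘ f) := by
      intro v
      obtain ⟨y, hy⟩ := pi2_surj e v
      obtain ⟨i, w, hw⟩ := hcover y
      exact ⟨i, by rw [Function.comp_apply, ← (key y (f i)).1 ⟨w, hw⟩, hy]⟩
    have hcard := Fintype.card_of_bijective ⟨hinj, hsurj⟩
    simp [ZMod.card] at hcard
    exact hcard.symm
  · rintro rfl
    have hcard : Fintype.card (Fin n → ZMod 2) = 2 ^ n := by simp [ZMod.card]
    let ev : Fin (2^n) ≃ (Fin n → ZMod 2) := (Fintype.equivFinOfCardEq hcard).symm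
    have hpi : ∀ i, pi2 e (e.symm (Multiplicative.ofAdd fun j => (((ev i) j).val : ℤ))) = ev i := by
      intro i; funext j; simp [pi2, MulEquiv.apply_symm_apply]
    refine ⟨fun i => e.symm (Multiplicative.ofAdd fun j => ((ev i j).val : ℤ)), ?_, ?_⟩
    · intro i j hij w hw
      have := (key _ _).1 ⟨w, hw⟩
      rw [hpi i, hpi j] at this
      exact hij (ev.injective this)
    · intro y
      refine ⟨ev.symm (pi2 e y), ?_⟩
      rw [key, hpi]
      simp

end Count

def f0 : groupLang.Constants := Unit.unit
def f1 : groupLang.Functions 1 := Unit.unit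
def f2 : groupLang.Functions 2 := Unit.unit

def mulT {α : Type*} (t₁ t₂ : groupLang.Term α) : groupLang.Term α := f2.apply₂ t₁ t₂
def invT {α : Type*} (t : groupLang.Term α) : groupLang.Term α := f1.apply₁ t
def oneT {α : Type*} : groupLang.Term α := f0.term

variable {G : Type*} [Group G]

@[simp] lemma funMap_f0 (v : Fin 0 → G) : Language.Structure.funMap (L := groupLang) f0 v = 1 := rfl
@[simp] lemma funMap_f1 (v : Fin 1 → G) :
    Language.Structure.funMap (L := groupLang) f1 v = (v 0)⁻¹ := rfl
@[simp] lemma funMap_f2 (v : Fin 2 → G) :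
    Language.Structure.funMap (L := groupLang) f2 v = v 0 * v 1 := rfl

@[simp] lemma realize_mulT {α : Type*} (v : α → G) (t₁ t₂ : groupLang.Term α) :
    (mulT t₁ t₂).realize v = t₁.realize v * t₂.realize v := by
  rw [mulT, Term.realize_functions_apply₂]; rfl

@[simp] lemma realize_invT {α : Type*} (v : α → G) (t : groupLang.Term α) :
    (invT t).realize v = (t.realize v)⁻¹ := by
  rw [invT, Term.realize_functions_apply₁]; rfl

@[simp] lemma realize_oneT {α : Type*} (v : α → G) :
    (oneT : groupLang.Term α).realize v = 1 := by
  rw [oneT, Term.realize_constants]; rfl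

def gT {k : ℕ} : groupLang.Term (Fin 1 ⊕ Fin k) := Term.var (Sum.inl 0)
def xT {k : ℕ} (i : Fin k) : groupLang.Term (Fin 1 ⊕ Fin k) := Term.var (Sum.inr i)

/-- `t` commutes with the parameter `g`. -/
def commF {k : ℕ} (t : groupLang.Term (Fin 1 ⊕ Fin k)) : groupLang.BoundedFormula (Fin 1) k :=
  Term.bdEqual (mulT t gT) (mulT gT t)

/-- `t` is the square of an element commuting with the parameter `g`. -/
def sqF {k : ℕ} (t : groupLang.Term (Fin 1 ⊕ Fin k)) : groupLang.BoundedFormula (Fin 1) k :=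
  BoundedFormula.ex ((commF (xT (Fin.last k))) ⊓
    (Term.bdEqual (mulT (xT (Fin.last k)) (xT (Fin.last k)))
      (t.relabel (Sum.map id Fin.castSucc))))

/-- The formula `Z_r(x)`. -/
noncomputable def zForm (r : ℕ) : groupLang.Formula (Fin 1) :=
  (Term.equal (Term.var 0) oneT).not ⊓
  BoundedFormula.exs (
    (BoundedFormula.iInf fun i : Fin (2^r) => commF (xT i)) ⊓
    (BoundedFormula.iInf
       fun p : {p : Fin (2^r) × Fin (2^r) // p.1 ≠ p.2} => (sqF (mulT (xT p.1.1) (invT (xT p.1.2)))).not) ⊓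
    BoundedFormula.all ((commF (xT (Fin.last (2^r)))).imp
      (BoundedFormula.iSup fun i : Fin (2^r) =>
         sqF (mulT (xT (Fin.last (2^r))) (invT (xT i.castSucc))))))

lemma realize_zForm (r : ℕ) (g : G) :
    (zForm r).Realize (fun _ => g) ↔
      (g ≠ 1 ∧ ∃ f : Fin (2^r) → G,
        ((∀ i, f i * g = g * f i) ∧
          (∀ i j : Fin (2^r), i ≠ j → ∀ w, w * g = g * w → ¬ w * w = f i * (f j)⁻¹)) ∧
        (∀ y, y * g = g * y → ∃ i : Fin (2^r), ∃ w, (w * g = g * w) ∧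
            w * w = y * (f i)⁻¹)) := by
  simp [zForm, commF, sqF, gT, xT, mulT, invT, Term.realize, Fin.snoc_castSucc]

end ZFormAux

/-- For every `r ≥ 1` there is a first-order formula `Z_r(x)` in the language of groups,
depending only on `r`, such that for every torsion-free commutative-transitive group `G`
whose abelian subgroups are all finitely generated and every `g ∈ G`:
`G ⊨ Z_r(g)` iff `g ≠ 1` and the centralizer `Z_G(g)` is free abelian of rank `r`. -/
theorem exists_formula_centralizer_rank (r : ℕ) (hr : 1 ≤ r) :
    ∃ φ : groupLang.Formula (Fin 1),
      ∀ (G : Type*) [Group G],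
        Monoid.IsTorsionFree G →
        (∀ x y z : G, y ≠ 1 → ⁅x, y⁆ = 1 → ⁅y, z⁆ = 1 → ⁅x, z⁆ = 1) →
        (∀ A : Subgroup G, (∀ a ∈ A, ∀ b ∈ A, a * b = b * a) → A.FG) →
        ∀ g : G,
          (φ.Realize (fun _ => g) ↔
            g ≠ 1 ∧
              Nonempty ((Subgroup.centralizer {g}) ≃* Multiplicative (Fin r → ℤ))) := by
  classical
  refine ⟨ZFormAux.zForm r, ?_⟩
  intro G _ htf hct hfg g
  rw [ZFormAux.realize_zForm]
  refine and_congr_right fun hg => ?_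
  set A := Subgroup.centralizer ({g} : Set G) with hA
  -- the centralizer is commutative
  have hcomm : ∀ a ∈ A, ∀ b ∈ A, a * b = b * a := by
    intro a ha b hb
    have h1 : ⁅a, g⁆ = 1 := by
      rw [commutatorElement_eq_one_iff_mul_comm]
      exact Subgroup.mem_centralizer_singleton_iff.1 ha
    have h2 : ⁅g, b⁆ = 1 := by
      rw [commutatorElement_eq_one_iff_mul_comm]
      exact (Subgroup.mem_centralizer_singleton_iff.1 hb).symm
    exact commutatorElement_eq_one_iff_mul_comm.1 (hct a g b hg h1 h2)
  letI : CommGroup A :=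
    { (inferInstance : Group A) with
      mul_comm := fun a b => Subtype.ext (hcomm a a.2 b b.2) }
  haveI : Group.FG A := (Group.fg_iff_subgroup_fg A).2 (hfg A hcomm)
  have htfA : Monoid.IsTorsionFree A := by
    intro a ha hfin
    refine htf (a : G) (fun h => ha (Subtype.ext h)) ?_
    exact (Function.Injective.isOfFinOrder_iff (f := A.subtype) Subtype.coe_injective).2 hfin
  obtain ⟨n, ⟨e⟩⟩ := ZFormAux.fg_tf_comm_iso A htfA
  -- translate the first-order condition into a condition inside `A`
  have htrans :
      (∃ f : Fin (2^r) → G,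
        ((∀ i, f i * g = g * f i) ∧
          (∀ i j : Fin (2^r), i ≠ j → ∀ w, w * g = g * w → ¬ w * w = f i * (f j)⁻¹)) ∧
        (∀ y, y * g = g * y → ∃ i : Fin (2^r), ∃ w, (w * g = g * w) ∧
            w * w = y * (f i)⁻¹)) ↔
      (∃ f : Fin (2^r) → A, (∀ i j, i ≠ j → ∀ w : A, w * w ≠ f i * (f j)⁻¹) ∧
        ∀ y : A, ∃ i, ∃ w : A, w * w = y * (f i)⁻¹) := by
    constructor
    · rintro ⟨f, ⟨hmem, hdist⟩, hcover⟩
      refine ⟨fun i => ⟨f i, Subgroup.mem_centralizer_singleton_iff.2 (hmem i)⟩, ?_, ?_⟩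
      · intro i j hij w hw
        exact hdist i j hij (w : G) (Subgroup.mem_centralizer_singleton_iff.1 w.2)
          (by simpa [Subtype.ext_iff] using hw)
      · intro y
        obtain ⟨i, w, hwc, hw⟩ :=
          hcover (y : G) (Subgroup.mem_centralizer_singleton_iff.1 y.2)
        exact ⟨i, ⟨w, Subgroup.mem_centralizer_singleton_iff.2 hwc⟩, Subtype.ext hw⟩
    · rintro ⟨f, hdist, hcover⟩
      refine ⟨fun i => (f i : G),
        ⟨fun i => Subgroup.mem_centralizer_singleton_iff.1 (f i).2, ?_⟩, ?_⟩
      · intro i j hij w hwc hw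
        exact hdist i j hij ⟨w, Subgroup.mem_centralizer_singleton_iff.2 hwc⟩
          (Subtype.ext hw)
      · intro y hy
        obtain ⟨i, w, hw⟩ := hcover ⟨y, Subgroup.mem_centralizer_singleton_iff.2 hy⟩
        exact ⟨i, (w : G), Subgroup.mem_centralizer_singleton_iff.1 w.2,
          by simpa [Subtype.ext_iff] using hw⟩
  rw [htrans, ZFormAux.cond_iff e r]
  constructor
  · rintro rfl
    exact ⟨e⟩
  · rintro ⟨e'⟩
    -- `A ≃* ℤ^r` and `A ≃* ℤ^n` force `n = r`
    exact (ZFormAux.cond_iff (e'.symm.trans e) r).1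
      ((ZFormAux.cond_iff (MulEquiv.refl (Multiplicative (Fin r → ℤ))) r).2 rfl)
end

section
/- Let G be a torsion-free commutative-transitive group in which every abelian subgroup is finitely generated, and let H ⪯ G be an elementarily embedded subgroup. Then for every h ∈ H with h ≠ 1, Z_H(h) = Z_G(h); in particular, Z_G(h) ≤ H. -/
open FirstOrder
open scoped commutatorElement

/-! ### Auxiliary terms in the language of groups -/

section Terms
variable {α : Type*}

def gone : groupLang.Term α := .func (l := 0) (() : groupFunctions 0) Fin.elim0
def gmul (t s : groupLang.Term α) : groupLang.Term α :=
  .func (l := 2) (() : groupFunctions 2) ![t, s]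
def ginv (t : groupLang.Term α) : groupLang.Term α :=
  .func (l := 1) (() : groupFunctions 1) ![t]
def gpow (t : groupLang.Term α) : ℕ → groupLang.Term α
  | 0 => gone
  | n+1 => gmul (gpow t n) t

variable {G : Type*} [Group G] (v : α → G)

@[simp] lemma realize_gone : (gone (α := α)).realize v = 1 := rfl
@[simp] lemma realize_gmul (t s : groupLang.Term α) :
    (gmul t s).realize v = t.realize v * s.realize v := rfl
@[simp] lemma realize_ginv (t : groupLang.Term α) :
    (ginv t).realize v = (t.realize v)⁻¹ := rfl
@[simp] lemma realize_gpow (t : groupLang.Term α) (n : ℕ) :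
    (gpow t n).realize v = (t.realize v) ^ n := by
  induction n with
  | zero => simp [gpow]
  | succ n ih => simp [gpow, ih, pow_succ]
end Terms

/-! ### Auxiliary formulas -/

section Formulas

/-- `∃ z, z * h = h * z ∧ z ^ p = w`, with free variables `0 ↦ h`, `1 ↦ w`. -/
def psiF (p : ℕ) : groupLang.Formula (Fin 2) :=
  ((Language.Term.bdEqual
      (gmul (.var (.inr 0)) (.var (.inl 0)))
      (gmul (.var (.inl 0)) (.var (.inr 0)))
    ⊓
    Language.Term.bdEqual (gpow (.var (.inr 0)) p) (.var (.inl 1)))).ex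

lemma realize_psiF {G : Type*} [Group G] (p : ℕ) (v : Fin 2 → G) :
    (psiF p).Realize v ↔ ∃ u : G, u * v 0 = v 0 * u ∧ u ^ p = v 1 := by
  rw [psiF, Language.Formula.Realize]
  rw [Language.BoundedFormula.realize_ex]
  apply exists_congr
  intro u
  rw [Language.BoundedFormula.realize_inf, Language.BoundedFormula.realize_bdEqual,
    Language.BoundedFormula.realize_bdEqual]
  simp [Fin.snoc]

/-- `∃ z, z * h = h * z ∧ z * z = x_i * x_j⁻¹` at level `k`. -/
def sqDiffF (k : ℕ) (i j : Fin k) : groupLang.BoundedFormula (Fin 1) k :=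
  ((Language.Term.bdEqual
      (gmul (.var (.inr (Fin.last k))) (.var (.inl 0)))
      (gmul (.var (.inl 0)) (.var (.inr (Fin.last k))))
    ⊓
    Language.Term.bdEqual
      (gmul (.var (.inr (Fin.last k))) (.var (.inr (Fin.last k))))
      (gmul (.var (.inr i.castSucc)) (ginv (.var (.inr j.castSucc)))))).ex

/-- `∃ x₁ … x_k, (∀ i, x_i h = h x_i) ∧ ∀ i ≠ j, ¬∃ z (zh = hz ∧ z² = x_i x_j⁻¹)`. -/
noncomputable def chiF (k : ℕ) : groupLang.Formula (Fin 1) :=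
  ((Language.BoundedFormula.iInf fun i : Fin k =>
      (Language.Term.bdEqual (gmul (.var (.inr i)) (.var (.inl 0)))
        (gmul (.var (.inl 0)) (.var (.inr i))))) ⊓
   (Language.BoundedFormula.iInf fun p : {p : Fin k × Fin k // p.1 ≠ p.2} =>
      (sqDiffF k p.1.1 p.1.2).not)).exs

lemma realize_chiF {G : Type*} [Group G] (k : ℕ) (v : Fin 1 → G) :
    (chiF k).Realize v ↔ ∃ xs : Fin k → G,
      (∀ i, xs i * v 0 = v 0 * xs i) ∧
      ∀ i j, i ≠ j → ¬∃ u : G, u * v 0 = v 0 * u ∧ u * u = xs i * (xs j)⁻¹ := by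
  rw [chiF, Language.BoundedFormula.realize_exs]
  apply exists_congr
  intro xs
  rw [Language.BoundedFormula.realize_inf]
  constructor
  · rintro ⟨hA, hB⟩
    rw [Language.BoundedFormula.realize_iInf] at hA hB
    refine ⟨fun i => ?_, fun i j hij => ?_⟩
    · have := hA i
      rw [Language.BoundedFormula.realize_bdEqual] at this
      simpa using this
    · have := hB ⟨(i, j), hij⟩
      rw [Language.BoundedFormula.realize_not, sqDiffF,
        Language.BoundedFormula.realize_ex] at this
      rintro ⟨u, hu1, hu2⟩
      refine this ⟨u, ?_⟩
      rw [Language.BoundedFormula.realize_inf, Language.BoundedFormula.realize_bdEqual,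
        Language.BoundedFormula.realize_bdEqual]
      constructor
      · simpa [Fin.snoc_last] using hu1
      · simpa [Fin.snoc_last, Fin.snoc_castSucc] using hu2
  · rintro ⟨h1, h2⟩
    constructor
    · rw [Language.BoundedFormula.realize_iInf]
      intro i
      rw [Language.BoundedFormula.realize_bdEqual]
      simpa using h1 i
    · rw [Language.BoundedFormula.realize_iInf]
      rintro ⟨⟨i, j⟩, hij⟩
      rw [Language.BoundedFormula.realize_not, sqDiffF, Language.BoundedFormula.realize_ex]
      rintro ⟨u, hu⟩
      rw [Language.BoundedFormula.realize_inf, Language.BoundedFormula.realize_bdEqual,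
        Language.BoundedFormula.realize_bdEqual] at hu
      refine h2 i j hij ⟨u, ?_, ?_⟩
      · simpa [Fin.snoc_last] using hu.1
      · simpa [Fin.snoc_last, Fin.snoc_castSucc] using hu.2

end Formulas

/-! ### Counting classes modulo doubling in a finite free `ℤ`-module -/

section Counting
variable {P : Type*} [AddCommGroup P] [Module ℤ P] [Module.Finite ℤ P] [Module.Free ℤ P]

noncomputable def qmap (x : P) : Module.Free.ChooseBasisIndex ℤ P → ZMod 2 :=
  fun i => (((Module.Free.chooseBasis ℤ P).repr x) i : ZMod 2)

omit [Module.Finite ℤ P] in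
lemma qmap_eq_iff (x y : P) :
    qmap x = qmap y ↔ ∃ u : P, u + u = x - y := by
  classical
  set b := Module.Free.chooseBasis ℤ P with hb
  constructor
  · intro hq
    have hdvd : ∀ i, (2 : ℤ) ∣ (b.repr (x - y)) i := by
      intro i
      have h0 : ((b.repr (x - y)) i : ZMod 2) = 0 := by
        have h1 := congrFun hq i
        simp only [qmap, ← hb] at h1
        simp [map_sub, Finsupp.sub_apply, h1]
      exact_mod_cast (ZMod.intCast_zmod_eq_zero_iff_dvd _ 2).mp h0
    set c := (b.repr (x - y)).mapRange (fun t => t / 2) (by simp) with hc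
    refine ⟨b.repr.symm c, ?_⟩
    have h2 : c + c = b.repr (x - y) := by
      ext i
      simp only [hc, Finsupp.add_apply, Finsupp.mapRange_apply]
      have := Int.mul_ediv_cancel' (hdvd i)
      omega
    calc b.repr.symm c + b.repr.symm c = b.repr.symm (c + c) := (map_add _ _ _).symm
      _ = x - y := by rw [h2]; simp
  · rintro ⟨u, hu⟩
    funext i
    have h2 : (b.repr x) i - (b.repr y) i = (b.repr u) i + (b.repr u) i := by
      have h3 := congrArg (fun w => (b.repr w) i) hu.symm
      simpa [map_sub, map_add, Finsupp.sub_apply, Finsupp.add_apply] using h3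
    have h4 : ((b.repr x) i : ZMod 2) - ((b.repr y) i : ZMod 2) = 0 := by
      have h5 := congrArg (Int.cast : ℤ → ZMod 2) h2
      push_cast at h5
      rw [h5]; ring_nf
      rw [show ((2:ZMod 2)) = 0 from by decide, mul_zero]
    simpa [qmap, ← hb] using sub_eq_zero.mp h4

lemma qmap_surjective : Function.Surjective (qmap (P := P)) := by
  classical
  intro ε
  set b := Module.Free.chooseBasis ℤ P with hb
  refine ⟨b.repr.symm (Finsupp.equivFunOnFinite.symm fun i => ((ε i).val : ℤ)), ?_⟩
  funext i
  simp only [qmap, ← hb, LinearEquiv.apply_symm_apply]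
  simpa [Finsupp.equivFunOnFinite] using ZMod.natCast_rightInverse (ε i)

lemma count_exists :
    ∃ f : Fin (2 ^ Module.finrank ℤ P) → P,
      ∀ i j, i ≠ j → ¬∃ u : P, u + u = f i - f j := by
  classical
  have hcard : Fintype.card (Module.Free.ChooseBasisIndex ℤ P → ZMod 2)
      = 2 ^ Module.finrank ℤ P := by
    rw [Fintype.card_fun, ZMod.card, Module.finrank_eq_card_chooseBasisIndex ℤ P]
  set e := Fintype.equivFinOfCardEq hcard
  choose g hg using qmap_surjective (P := P)
  refine ⟨fun c => g (e.symm c), fun i j hij hcon => hij ?_⟩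
  have : qmap (g (e.symm i)) = qmap (g (e.symm j)) := (qmap_eq_iff _ _).mpr hcon
  rw [hg, hg] at this
  simpa using e.symm.injective this

lemma count_le (k : ℕ) (f : Fin k → P)
    (hf : ∀ i j, i ≠ j → ¬∃ u : P, u + u = f i - f j) :
    k ≤ 2 ^ Module.finrank ℤ P := by
  classical
  have hcard : Fintype.card (Module.Free.ChooseBasisIndex ℤ P → ZMod 2)
      = 2 ^ Module.finrank ℤ P := by
    rw [Fintype.card_fun, ZMod.card, Module.finrank_eq_card_chooseBasisIndex ℤ P]
  have hinj : Function.Injective (fun c => qmap (f c)) := by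
    intro i j hij
    by_contra hne
    exact hf i j hne ((qmap_eq_iff _ _).mp hij)
  simpa [hcard] using Fintype.card_le_of_injective _ hinj
end Counting

/-! ### The key algebraic lemma -/

theorem keyAlgebra {M : Type*} [AddCommGroup M] [Module.Finite ℤ M] [NoZeroSMulDivisors ℤ M]
    (S : Submodule ℤ M)
    (H2 : ∀ (k : ℕ), (∃ f : Fin k → M, ∀ i j, i ≠ j → ¬∃ u : M, u + u = f i - f j) →
      ∃ g : Fin k → M, (∀ i, g i ∈ S) ∧ ∀ i j, i ≠ j → ¬∃ u ∈ S, u + u = g i - g j)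
    (H3 : ∀ (p : ℕ) (w : M), w ∈ S → (∃ y : M, p • y = w) → ∃ y ∈ S, p • y = w) :
    ∀ x : M, x ∈ S := by
  classical
  have hfree : Module.Free ℤ M := Module.free_of_finite_type_torsion_free'
  obtain ⟨g, hgS, hg⟩ := H2 _ (count_exists (P := M))
  set g' : Fin (2 ^ Module.finrank ℤ M) → ↥S := fun i => ⟨g i, hgS i⟩ with hg'
  have hg'p : ∀ i j, i ≠ j → ¬∃ u : ↥S, u + u = g' i - g' j := by
    rintro i j hij ⟨u, hu⟩
    refine hg i j hij ⟨u.val, u.2, ?_⟩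
    have := congrArg (Subtype.val) hu
    push_cast at this
    exact this
  have h1 : 2 ^ Module.finrank ℤ M ≤ 2 ^ Module.finrank ℤ ↥S :=
    count_le _ g' hg'p
  have hrank : Module.finrank ℤ ↥S = Module.finrank ℤ M :=
    le_antisymm (Submodule.finrank_le S) ((Nat.pow_le_pow_iff_right one_lt_two).mp h1)
  have htor : ∀ x : M, ∃ k : ℕ, 0 < k ∧ k • x ∈ S := by
    intro x
    by_contra hno
    push_neg at hno
    have hnoz : ∀ t : ℤ, t ≠ 0 → t • x ∉ S := by
      intro t ht hmem
      refine hno t.natAbs (by positivity) ?_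
      have : (t.natAbs : ℤ) • x ∈ S := by
        rcases Int.natAbs_eq t with hcase | hcase
        · rw [← hcase]; exact hmem
        · rw [show ((t.natAbs : ℤ)) = -t from by omega, neg_smul]
          exact S.neg_mem hmem
      rwa [natCast_zsmul] at this
    set φ : (↥S × ℤ) →ₗ[ℤ] M :=
      (S.subtype).coprod (LinearMap.toSpanSingleton ℤ M x) with hφ
    have hinj : Function.Injective φ := by
      have hker : ∀ z : ↥S × ℤ, φ z = 0 → z = 0 := by
        rintro ⟨s, t⟩ h0
        simp only [hφ, LinearMap.coprod_apply, Submodule.coe_subtype,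
          LinearMap.toSpanSingleton_apply] at h0
        by_cases ht : t = 0
        · subst ht
          simp only [zero_smul, add_zero] at h0
          have : s = 0 := Subtype.ext h0
          simp [this]
        · exfalso
          refine hnoz (-t) (by simpa using ht) ?_
          have : t • x = -(s : M) := by linear_combination (norm := abel) h0
          rw [neg_smul, this, neg_neg]
          exact s.2
      intro a b hab
      have := hker (a - b) (by rw [map_sub, hab, sub_self])
      exact sub_eq_zero.mp this
    have hle : Module.finrank ℤ (↥S × ℤ) ≤ Module.finrank ℤ M :=
      LinearMap.finrank_le_finrank_of_injective hinj
    rw [Module.finrank_prod, Module.finrank_self, hrank] at hle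
    omega
  intro x
  obtain ⟨k, hk0, hkS⟩ := htor x
  have hex : ∃ k : ℕ, 0 < k ∧ k • x ∈ S := ⟨k, hk0, hkS⟩
  set k0 := Nat.find hex with hk0def
  obtain ⟨hk0pos, hk0S⟩ := Nat.find_spec hex
  rw [← hk0def] at hk0pos hk0S
  rcases eq_or_ne k0 1 with h1' | hne1
  · rw [h1', one_nsmul] at hk0S; exact hk0S
  · exfalso
    set p := k0.minFac with hp
    have hpprime : p.Prime := Nat.minFac_prime hne1
    set j := k0 / p with hj
    have hpj : p * j = k0 := Nat.mul_div_cancel' k0.minFac_dvd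
    have hjpos : 0 < j := by
      rcases Nat.eq_zero_or_pos j with hcase | hcase
      · rw [hcase, mul_zero] at hpj; omega
      · exact hcase
    have hjlt : j < k0 := Nat.div_lt_self hk0pos hpprime.one_lt
    have hydiv : ∃ y : M, p • y = k0 • x := ⟨j • x, by rw [← mul_nsmul', hpj]⟩
    obtain ⟨y, hyS, hyp⟩ := H3 p (k0 • x) hk0S hydiv
    have : y = j • x := by
      have h2 : (p : ℤ) • (y - j • x) = 0 := by
        rw [smul_sub, natCast_zsmul, natCast_zsmul, hyp, ← mul_nsmul', hpj, sub_self]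
      rcases smul_eq_zero.mp h2 with hcase | hcase
      · exact absurd (by exact_mod_cast hcase) hpprime.ne_zero
      · exact sub_eq_zero.mp hcase
    subst this
    exact Nat.find_min hex hjlt ⟨hjpos, hyS⟩

/-! ### The main theorem -/

/-- Let `G` be a torsion-free commutative-transitive group whose abelian subgroups are
all finitely generated, and let `H ⪯ G` be elementarily embedded. Then for every
nontrivial `h ∈ H` we have `Z_H(h) = Z_G(h)`; in particular `Z_G(h) ≤ H`. -/
theorem centralizer_eq_of_elemEmbedded {G : Type*} [Group G]
    (htf : Monoid.IsTorsionFree G)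
    (hct : ∀ x y z : G, y ≠ 1 → ⁅x, y⁆ = 1 → ⁅y, z⁆ = 1 → ⁅x, z⁆ = 1)
    (hfg : ∀ A : Subgroup G, (∀ a ∈ A, ∀ b ∈ A, a * b = b * a) → A.FG)
    (H : Subgroup G) (hHG : ElemEmbedded H) :
    ∀ (h : G) (hhH : h ∈ H), h ≠ 1 →
      Subgroup.map H.subtype (Subgroup.centralizer {(⟨h, hhH⟩ : H)})
          = Subgroup.centralizer {h} ∧
      Subgroup.centralizer {h} ≤ H := by
  intro h hhH hne
  set hH : ↥H := ⟨h, hhH⟩ with hhHdef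
  set Z := Subgroup.centralizer {h} with hZdef
  have hZ : ∀ x : G, x ∈ Z ↔ h * x = x * h := by
    intro x
    rw [hZdef, Subgroup.mem_centralizer_iff]
    simp
  have hZcomm : ∀ x ∈ Z, ∀ y ∈ Z, x * y = y * x := by
    intro x hx y hy
    refine commutatorElement_eq_one_iff_mul_comm.mp (hct x h y hne ?_ ?_)
    · exact commutatorElement_eq_one_iff_mul_comm.mpr ((hZ x).mp hx).symm
    · exact commutatorElement_eq_one_iff_mul_comm.mpr ((hZ y).mp hy)
  letI : CommGroup ↥Z :=
    { (inferInstance : Group ↥Z) with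
      mul_comm := fun a b => Subtype.ext (hZcomm a a.2 b b.2) }
  haveI : Group.FG ↥Z := (Group.fg_iff_subgroup_fg Z).mpr (hfg Z hZcomm)
  haveI hMF : Module.Finite ℤ (Additive ↥Z) := Module.Finite.iff_addGroup_fg.mpr inferInstance
  haveI hMT : NoZeroSMulDivisors ℤ (Additive ↥Z) := by
    refine @IsAddTorsionFree.to_noZeroSMulDivisors_int _ _ (isAddTorsionFree_iff_not_isOfFinAddOrder.mpr ?_)
    intro a ha hfin
    refine htf ((Additive.toMul a : ↥Z) : G) (fun hh => ha ?_) (MonoidHom.isOfFinOrder Z.subtype ((isOfFinAddOrder_ofMul_iff (x := Additive.toMul a)).mp ?_))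
    · have : Additive.ofMul (a.toMul) = Additive.ofMul (1 : ↥Z) := congrArg _ (Subtype.ext hh)
      simpa using this
    · simpa using hfin
  -- the submodule corresponding to elements of `Z` lying in `H`
  set S : Submodule ℤ (Additive ↥Z) :=
    AddSubgroup.toIntSubmodule ((H.subgroupOf Z).toAddSubgroup) with hSdef
  have hSmem : ∀ m : Additive ↥Z, m ∈ S ↔ ((Additive.toMul m : ↥Z) : G) ∈ H := by
    intro m
    rw [hSdef, ← SetLike.mem_coe, AddSubgroup.coe_toIntSubmodule]
    constructor
    · intro hm
      exact (Subgroup.mem_subgroupOf).mp hm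
    · intro hm
      exact (Subgroup.mem_subgroupOf).mpr hm
  -- transfer of divisibility
  have H3 : ∀ (p : ℕ) (w : Additive ↥Z), w ∈ S →
      (∃ y : Additive ↥Z, p • y = w) → ∃ y ∈ S, p • y = w := by
    intro p w hw ⟨y, hy⟩
    set wH : ↥H := ⟨((Additive.toMul w : ↥Z) : G), (hSmem w).mp hw⟩ with hwH
    have hG : (psiF p).Realize (fun i => ((![hH, wH] i : ↥H) : G)) := by
      rw [realize_psiF]
      refine ⟨((Additive.toMul y : ↥Z) : G), ?_, ?_⟩
      · simp only [Matrix.cons_val_zero]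
        exact ((hZ _).mp (Additive.toMul y).2).symm
      · simp only [Matrix.cons_val_zero, Matrix.cons_val_one, Matrix.head_cons]
        have := congrArg (fun z : ↥Z => (z : G)) (congrArg Additive.toMul hy)
        simpa [toMul_nsmul, SubgroupClass.coe_pow] using this
    have hHreal := (hHG 2 (psiF p) ![hH, wH]).mpr hG
    rw [realize_psiF] at hHreal
    obtain ⟨u, hu1, hu2⟩ := hHreal
    simp only [Matrix.cons_val_zero, Matrix.cons_val_one, Matrix.head_cons] at hu1 hu2
    have huZ : (u : G) ∈ Z := by
      rw [hZ]
      exact (congrArg (fun z : ↥H => (z : G)) hu1).symm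
    refine ⟨Additive.ofMul (⟨(u : G), huZ⟩ : ↥Z), ?_, ?_⟩
    · exact u.2
    · apply Additive.toMul.injective
      apply Subtype.ext
      rw [toMul_nsmul]
      have := congrArg (fun z : ↥H => (z : G)) hu2
      simpa [SubgroupClass.coe_pow] using this
  -- transfer of counting
  have H2 : ∀ (k : ℕ),
      (∃ f : Fin k → Additive ↥Z, ∀ i j, i ≠ j → ¬∃ u : Additive ↥Z, u + u = f i - f j) →
      ∃ g : Fin k → Additive ↥Z, (∀ i, g i ∈ S) ∧
        ∀ i j, i ≠ j → ¬∃ u ∈ S, u + u = g i - g j := by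
    rintro k ⟨f, hf⟩
    have hG : (chiF k).Realize (fun i => (((fun _ => hH) i : ↥H) : G)) := by
      rw [realize_chiF]
      refine ⟨fun i => ((Additive.toMul (f i) : ↥Z) : G), fun i => ?_, ?_⟩
      · exact ((hZ _).mp (Additive.toMul (f i)).2).symm
      · rintro i j hij ⟨u, hu1, hu2⟩
        have huZ : u ∈ Z := (hZ u).mpr hu1.symm
        refine hf i j hij ⟨Additive.ofMul (⟨u, huZ⟩ : ↥Z), ?_⟩
        apply Additive.toMul.injective
        apply Subtype.ext
        rw [toMul_add, toMul_sub]
        simpa [div_eq_mul_inv] using hu2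
    have hHreal := (hHG 1 (chiF k) (fun _ => hH)).mpr hG
    rw [realize_chiF] at hHreal
    obtain ⟨xs, hxs1, hxs2⟩ := hHreal
    have hxsZ : ∀ i, ((xs i : ↥H) : G) ∈ Z := by
      intro i
      rw [hZ]
      exact (congrArg (fun z : ↥H => (z : G)) (hxs1 i)).symm
    refine ⟨fun i => Additive.ofMul (⟨(xs i : G), hxsZ i⟩ : ↥Z), fun i => (xs i).2, ?_⟩
    rintro i j hij ⟨u, huS, huu⟩
    set uH : ↥H := ⟨((Additive.toMul u : ↥Z) : G), (hSmem u).mp huS⟩ with huH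
    refine hxs2 i j hij ⟨uH, ?_, ?_⟩
    · apply Subtype.ext
      exact ((hZ _).mp (Additive.toMul u).2).symm
    · apply Subtype.ext
      have := congrArg (fun z : ↥Z => (z : G)) (congrArg Additive.toMul huu)
      simpa [toMul_add, toMul_sub, div_eq_mul_inv] using this
  have hmain := keyAlgebra S H2 H3
  have hZH : ∀ x, x ∈ Z → x ∈ H := by
    intro x hx
    exact (hSmem (Additive.ofMul (⟨x, hx⟩ : ↥Z))).mp (hmain _)
  constructor
  · ext x
    constructor
    · rintro ⟨y, hy, rfl⟩
      rw [SetLike.mem_coe, Subgroup.mem_centralizer_iff] at hy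
      have := hy hH (Set.mem_singleton _)
      rw [hZ]
      exact congrArg (fun z : ↥H => (z : G)) this
    · intro hx
      refine ⟨⟨x, hZH x hx⟩, ?_, rfl⟩
      rw [SetLike.mem_coe, Subgroup.mem_centralizer_iff]
      rintro g hg
      rw [Set.mem_singleton_iff] at hg
      subst hg
      exact Subtype.ext ((hZ x).mp hx)
  · exact hZH
end

section
/- Let G be a group with a finite generating set S, let r : G → G be an idempotent group homomorphism with image H such that for every s ∈ S either r(s) = s or r(s) = 1, and let S_H = {s ∈ S : r(s) = s}. Then S_H generates H, and for every h ∈ H the word length of h with respect to S_H equals the word length of h with respect to S; that is, the minimal n such that h is a product of n elements of S ∪ S⁻¹ equals the minimal n such that h is a product of n elements of S_H ∪ S_H⁻¹. Consequently, for all a, b ∈ H the word-metric distance between a and b in H with respect to S_H equals their word-metric distance in G with respect to S (H is isometrically embedded in G). -/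
/-- The word length of `g` with respect to a generating set `S`: the minimal `n`
such that `g` is a product of `n` elements of `S ∪ S⁻¹`. -/
noncomputable def wordLength {G : Type*} [Group G] (S : Set G) (g : G) : ℕ :=
  sInf {n : ℕ | ∃ l : List G, l.length = n ∧ (∀ x ∈ l, x ∈ S ∨ x⁻¹ ∈ S) ∧ l.prod = g}

private lemma map_word {G : Type*} [Group G] (S : Finset G) (r : G →* G)
    (hS : ∀ s ∈ S, r s = s ∨ r s = 1) :
    ∀ l : List G, (∀ x ∈ l, x ∈ (S : Set G) ∨ x⁻¹ ∈ (S : Set G)) →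
    ∃ l' : List G, l'.length ≤ l.length ∧
      (∀ x ∈ l', x ∈ {s : G | s ∈ S ∧ r s = s} ∨ x⁻¹ ∈ {s : G | s ∈ S ∧ r s = s}) ∧
      l'.prod = r l.prod := by
  intro l
  induction l with
  | nil => intro _; exact ⟨[], by simp, by simp, by simp⟩
  | cons a t ih =>
    intro hl
    obtain ⟨l', hlen, hmem, hprod⟩ := ih (fun x hx => hl x (List.mem_cons_of_mem a hx))
    have ha : r a = a ∨ r a = 1 := by
      rcases hl a (List.mem_cons_self (a := a) (l := t)) with h | h
      · exact hS a h
      · rcases hS _ h with h' | h'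
        · left
          have := congrArg (·⁻¹) h'
          simpa using this
        · right
          have := congrArg (·⁻¹) h'
          simpa using this
    rcases ha with ha | ha
    · refine ⟨a :: l', by simpa using Nat.succ_le_succ hlen, ?_, ?_⟩
      · intro x hx
        rcases List.mem_cons.mp hx with rfl | hx
        · rcases hl x (List.mem_cons_self (a := x) (l := t)) with h | h
          · exact Or.inl ⟨h, ha⟩
          · refine Or.inr ⟨h, ?_⟩
            have := congrArg (·⁻¹) ha
            simpa using this
        · exact hmem x hx
      · simp [hprod, ha]
    · refine ⟨l', le_trans hlen (by simp), hmem, ?_⟩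
      simp [hprod, ha]

/-- Let `G` be generated by a finite set `S`, and let `r : G → G` be an idempotent
endomorphism with image `H` such that every `s ∈ S` satisfies `r(s) = s` or `r(s) = 1`.
Then `S_H = {s ∈ S : r(s) = s}` generates `H`, every `h ∈ H` has the same word length
with respect to `S_H` as with respect to `S`, and consequently the word metrics agree:
`H` is isometrically embedded in `G`. -/
theorem retract_isometrically_embedded {G : Type*} [Group G]
    (S : Finset G) (hgen : Subgroup.closure (S : Set G) = ⊤)
    (r : G →* G) (hidem : r.comp r = r)
    (hS : ∀ s ∈ S, r s = s ∨ r s = 1) :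
    Subgroup.closure {s : G | s ∈ S ∧ r s = s} = r.range ∧
    (∀ h ∈ r.range,
      wordLength {s : G | s ∈ S ∧ r s = s} h = wordLength (S : Set G) h) ∧
    (∀ a ∈ r.range, ∀ b ∈ r.range,
      wordLength {s : G | s ∈ S ∧ r s = s} (a⁻¹ * b)
        = wordLength (S : Set G) (a⁻¹ * b)) := by
  set SH : Set G := {s : G | s ∈ S ∧ r s = s} with hSH
  -- every element is a word in S
  have exists_word : ∀ g : G, ∃ l : List G,
      (∀ x ∈ l, x ∈ (S : Set G) ∨ x⁻¹ ∈ (S : Set G)) ∧ l.prod = g := by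
    intro g
    have hg : g ∈ (Subgroup.closure (S : Set G)).toSubmonoid := by
      rw [hgen]; trivial
    rw [Subgroup.closure_toSubmonoid] at hg
    obtain ⟨l, hl, hprod⟩ := Submonoid.exists_list_of_mem_closure hg
    refine ⟨l, fun x hx => ?_, hprod⟩
    rcases hl x hx with h | h
    · exact Or.inl h
    · exact Or.inr (by simpa using h)
  have hfix : ∀ h ∈ r.range, r h = h := by
    rintro _ ⟨g, rfl⟩
    have := DFunLike.congr_fun hidem g
    simpa using this
  -- closure equality
  have hclos : Subgroup.closure SH = r.range := by
    apply le_antisymm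
    · rw [Subgroup.closure_le]
      rintro s ⟨_, hs⟩
      exact ⟨s, hs⟩
    · rintro _ ⟨g, rfl⟩
      obtain ⟨l, hl, hprod⟩ := exists_word g
      obtain ⟨l', _, hmem, hprod'⟩ := map_word S r hS l hl
      rw [← hprod, ← hprod']
      refine list_prod_mem (fun x hx => ?_)
      rcases hmem x hx with h | h
      · exact Subgroup.subset_closure h
      · simpa using (Subgroup.closure SH).inv_mem (Subgroup.subset_closure h)
  have hword : ∀ h ∈ r.range, wordLength SH h = wordLength (S : Set G) h := by
    intro h hh
    -- h has a word in SH
    have hhc : h ∈ (Subgroup.closure SH).toSubmonoid := by rw [hclos]; exact hh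
    rw [Subgroup.closure_toSubmonoid] at hhc
    obtain ⟨lh, hlh, hlhp⟩ := Submonoid.exists_list_of_mem_closure hhc
    unfold wordLength
    have hAne : {n : ℕ | ∃ l : List G, l.length = n ∧ (∀ x ∈ l, x ∈ SH ∨ x⁻¹ ∈ SH) ∧
        l.prod = h}.Nonempty := by
      refine ⟨lh.length, lh, rfl, fun x hx => ?_, hlhp⟩
      rcases hlh x hx with h' | h'
      · exact Or.inl h'
      · exact Or.inr (by simpa using h')
    have hBne : {n : ℕ | ∃ l : List G, l.length = n ∧
        (∀ x ∈ l, x ∈ (S : Set G) ∨ x⁻¹ ∈ (S : Set G)) ∧ l.prod = h}.Nonempty := by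
      obtain ⟨l, hl, hp⟩ := exists_word h
      exact ⟨l.length, l, rfl, hl, hp⟩
    apply le_antisymm
    · -- map an optimal S-word through r
      obtain ⟨l, hlen, hl, hp⟩ := Nat.sInf_mem hBne
      obtain ⟨l', hlen', hmem, hprod'⟩ := map_word S r hS l hl
      have : r h = h := hfix h hh
      refine le_trans (Nat.sInf_le ⟨l', rfl, hmem, by rw [hprod', hp, this]⟩) ?_
      rw [← hlen]; exact hlen'
    · -- any SH word is an S word
      obtain ⟨l, hlen, hl, hp⟩ := Nat.sInf_mem hAne
      refine le_trans (Nat.sInf_le ⟨l, rfl, fun x hx => ?_, hp⟩) (le_of_eq hlen)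
      rcases hl x hx with h' | h'
      · exact Or.inl h'.1
      · exact Or.inr h'.1
  refine ⟨hclos, hword, fun a ha b hb => hword _ (r.range.mul_mem (r.range.inv_mem ha) hb)⟩
end

section
/- Fix integers n ≥ 1 and k ≥ 1, positive integers r₁,…,r_k, and for each i ∈ {1,…,k} a tuple of words b_{i,1},…,b_{i,r_i} in the free group on n generators x₁,…,xₙ. Then there exists a first-order formula ε(x₁,…,xₙ) in the language of groups such that for every torsion-free commutative-transitive group G in which every abelian subgroup is finitely generated, and for every tuple (s₁,…,sₙ) ∈ Gⁿ: G ⊨ ε(s₁,…,sₙ) if and only if for each i ∈ {1,…,k} there exists j with b_{i,j}(s₁,…,sₙ) ≠ 1, and for every j with b_{i,j}(s₁,…,sₙ) ≠ 1 the centralizer Z_G(b_{i,j}(s₁,…,sₙ)) is free abelian of rank rᵢ. -/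
open FirstOrder
open scoped commutatorElement

namespace GrpFO
open FirstOrder.Language

variable {α : Type*} {G : Type*} [Group G]

def tOne : groupLang.Term α := Term.func (l := 0) (() : Unit) ![]
def tInv (t : groupLang.Term α) : groupLang.Term α := Term.func (l := 1) (() : Unit) ![t]
def tMul (t₁ t₂ : groupLang.Term α) : groupLang.Term α := Term.func (l := 2) (() : Unit) ![t₁, t₂]

@[simp] lemma realize_tOne (v : α → G) : (tOne : groupLang.Term α).realize v = 1 := rfl
@[simp] lemma realize_tInv (v : α → G) (t : groupLang.Term α) :
    (tInv t).realize v = (t.realize v)⁻¹ := rfl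
@[simp] lemma realize_tMul (v : α → G) (t₁ t₂ : groupLang.Term α) :
    (tMul t₁ t₂).realize v = t₁.realize v * t₂.realize v := rfl

def listTerm : List (α × Bool) → groupLang.Term α
  | [] => tOne
  | p :: L => tMul (if p.2 then Term.var p.1 else tInv (Term.var p.1)) (listTerm L)

lemma realize_listTerm (v : α → G) : ∀ L : List (α × Bool),
    (listTerm L).realize v = (L.map fun x => cond x.2 (v x.1) (v x.1)⁻¹).prod
  | [] => by simp [listTerm]
  | p :: L => by
    cases hb : p.2 <;>
    simp [listTerm, hb, realize_listTerm v L]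

variable [DecidableEq α]

def wordTerm (w : FreeGroup α) : groupLang.Term α := listTerm w.toWord

@[simp] lemma realize_wordTerm (v : α → G) (w : FreeGroup α) :
    (wordTerm w).realize v = FreeGroup.lift v w := by
  rw [wordTerm, realize_listTerm, ← FreeGroup.lift_mk, FreeGroup.mk_toWord]

end GrpFO

namespace GrpFO
open FirstOrder.Language

variable {α : Type*} {G : Type*} [Group G]

/-- `SqP g` : `g` is a square. -/
def SqP (g : G) : Prop := ∃ t : G, t * t = g

/-- The key first-order condition expressing that the centralizer has rank `m`. -/
def RkPred (m : ℕ) (g : G) : Prop :=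
  ∃ y : Fin (2 ^ m) → G, (∀ a, y a * g = g * y a) ∧
    (∀ a c, a ≠ c → ¬ SqP (y a * (y c)⁻¹)) ∧
    (∀ z : G, z * g = g * z → ∃ a, SqP (z * (y a)⁻¹))

/-- formula: t is a square -/
noncomputable def sqF (t : groupLang.Term α) : groupLang.Formula α :=
  Formula.iExs Unit
    (Term.equal (tMul (Term.var (Sum.inr ())) (Term.var (Sum.inr ())))
      (t.relabel Sum.inl))

@[simp] lemma realize_sqF (v : α → G) (t : groupLang.Term α) :
    (sqF t).Realize v ↔ SqP (t.realize v) := by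
  simp only [sqF, Formula.realize_iExs, Formula.realize_equal, Term.realize_relabel]
  constructor
  · rintro ⟨i, hi⟩
    exact ⟨i (), by simpa using hi⟩
  · rintro ⟨u, hu⟩
    exact ⟨fun _ => u, by simpa using hu⟩

/-- formula: the two terms commute -/
noncomputable def commF (t u : groupLang.Term α) : groupLang.Formula α :=
  Term.equal (tMul t u) (tMul u t)

@[simp] lemma realize_commF (v : α → G) (t u : groupLang.Term α) :
    (commF t u).Realize v ↔ t.realize v * u.realize v = u.realize v * t.realize v := by
  simp [commF]

@[simp] lemma realize_commF' (v : α → G) (xs : Fin 0 → G) (t u : groupLang.Term α) :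
    BoundedFormula.Realize (commF t u) v xs ↔
      t.realize v * u.realize v = u.realize v * t.realize v := by
  rw [Subsingleton.elim xs default]; exact realize_commF v t u

@[simp] lemma realize_sqF' (v : α → G) (xs : Fin 0 → G) (t : groupLang.Term α) :
    BoundedFormula.Realize (sqF t) v xs ↔ SqP (t.realize v) := by
  rw [Subsingleton.elim xs default]; exact realize_sqF v t

noncomputable def rkBodyC (m : ℕ) (t : groupLang.Term α) :
    groupLang.Formula (α ⊕ Fin (2 ^ m)) :=
  Formula.iAlls Unit
    ((commF (Term.var (Sum.inr ())) (t.relabel (Sum.inl ∘ Sum.inl))).imp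
      (BoundedFormula.iSup fun a =>
        sqF (tMul (Term.var (Sum.inr ())) (tInv (Term.var (Sum.inl (Sum.inr a)))))))

noncomputable def rkF (m : ℕ) (t : groupLang.Term α) : groupLang.Formula α :=
  Formula.iExs (Fin (2 ^ m))
    ((BoundedFormula.iInf fun a =>
        commF (Term.var (Sum.inr a)) (t.relabel Sum.inl)) ⊓
     ((BoundedFormula.iInf
        (fun p : {p : Fin (2 ^ m) × Fin (2 ^ m) // p.1 ≠ p.2} =>
          (sqF (tMul (Term.var (Sum.inr p.1.1)) (tInv (Term.var (Sum.inr p.1.2))))).not)) ⊓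
      rkBodyC m t))

set_option maxHeartbeats 1000000 in
lemma realize_rkF (v : α → G) (m : ℕ) (t : groupLang.Term α) :
    (rkF m t).Realize v ↔ RkPred m (t.realize v) := by
  simp only [rkF, rkBodyC, Formula.realize_iExs, BoundedFormula.realize_iExs,
    BoundedFormula.realize_iInf, BoundedFormula.realize_inf, BoundedFormula.realize_iSup,
    BoundedFormula.realize_not, BoundedFormula.realize_imp, Formula.realize_iAlls,
    BoundedFormula.realize_iAlls,
    Formula.realize_imp, Formula.realize_inf, Formula.realize_not, Formula.Realize,
    realize_commF', realize_sqF', Finset.mem_univ, Finset.mem_filter, true_and,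
    forall_const, id_eq, Term.realize_relabel, Term.realize_var, Sum.elim_inl, Sum.elim_inr,
    realize_tMul, realize_tInv, Function.comp_def, RkPred]
  constructor
  · rintro ⟨i, h1, h2, h3⟩
    refine ⟨fun a => i a, h1, fun a c hac => h2 ⟨(a, c), hac⟩, fun z hz => ?_⟩
    obtain ⟨a, ha⟩ := h3 (fun _ => z) hz
    exact ⟨a, ha⟩
  · rintro ⟨y, h1, h2, h3⟩
    refine ⟨y, h1, fun p => h2 p.1.1 p.1.2 p.2, fun i hi => ?_⟩
    obtain ⟨a, ha⟩ := h3 (i ()) hi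
    exact ⟨a, ha⟩

def CovP (k : ℕ) (A : Type*) [Group A] : Prop :=
  ∃ y : Fin (2 ^ k) → A, (∀ a c, a ≠ c → ¬ SqP (y a * (y c)⁻¹)) ∧
    (∀ z : A, ∃ a, SqP (z * (y a)⁻¹))

lemma sqP_map {A B : Type*} [Group A] [Group B] (e : A ≃* B) (x : A) :
    SqP (e x) ↔ SqP x := by
  constructor
  · rintro ⟨t, ht⟩
    refine ⟨e.symm t, ?_⟩
    have := congrArg e.symm ht
    simpa using this
  · rintro ⟨t, ht⟩
    exact ⟨e t, by rw [← map_mul, ht]⟩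

lemma covP_congr {A B : Type*} [Group A] [Group B] (e : A ≃* B) (k : ℕ) :
    CovP k A ↔ CovP k B := by
  constructor
  · rintro ⟨y, h1, h2⟩
    refine ⟨fun a => e (y a), fun a c hac hsq => h1 a c hac ?_, fun z => ?_⟩
    · rw [← (sqP_map e _)]; simpa using hsq
    · obtain ⟨a, ha⟩ := h2 (e.symm z)
      refine ⟨a, ?_⟩
      rw [← sqP_map e _] at ha
      simpa using ha
  · rintro ⟨y, h1, h2⟩
    refine ⟨fun a => e.symm (y a), fun a c hac hsq => h1 a c hac ?_, fun z => ?_⟩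
    · rw [← (sqP_map e.symm _)]; simpa using hsq
    · obtain ⟨a, ha⟩ := h2 (e z)
      refine ⟨a, ?_⟩
      rw [← sqP_map e.symm _] at ha
      simpa using ha

/-- reduction mod 2 -/
def qm {m : ℕ} (z : Fin m → ℤ) : Fin m → ZMod 2 := fun i => ((z i : ℤ) : ZMod 2)

lemma qm_add {m : ℕ} (z w : Fin m → ℤ) : qm (z + w) = qm z + qm w := by
  funext i; simp [qm]

lemma qm_sub {m : ℕ} (z w : Fin m → ℤ) : qm (z - w) = qm z - qm w := by
  funext i; simp [qm]

lemma sqP_mult_iff {m : ℕ} (z : Fin m → ℤ) :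
    SqP (Multiplicative.ofAdd z) ↔ qm z = 0 := by
  constructor
  · rintro ⟨t, ht⟩
    have ht' : t.toAdd + t.toAdd = z := by
      have := congrArg Multiplicative.toAdd ht
      simpa using this
    funext i
    have h2 : z i = 2 * t.toAdd i := by rw [← ht']; simp; ring
    show ((z i : ℤ) : ZMod 2) = 0
    exact (ZMod.intCast_zmod_eq_zero_iff_dvd _ 2).mpr ⟨_, h2⟩
  · intro hq
    have hd : ∀ i, ∃ c : ℤ, z i = 2 * c := by
      intro i
      have : ((z i : ℤ) : ZMod 2) = 0 := congrFun hq i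
      exact (ZMod.intCast_zmod_eq_zero_iff_dvd (z i) 2).mp (by exact_mod_cast this)
    choose c hc using hd
    refine ⟨Multiplicative.ofAdd c, ?_⟩
    rw [← ofAdd_add]
    congr 1
    funext i
    rw [Pi.add_apply, hc i]; ring

lemma covP_self (m : ℕ) : CovP m (Multiplicative (Fin m → ℤ)) := by
  have hsq : ∀ u v : Multiplicative (Fin m → ℤ),
      SqP (u * v⁻¹) ↔ qm u.toAdd = qm v.toAdd := by
    intro u v
    have h : u * v⁻¹ = Multiplicative.ofAdd (u.toAdd - v.toAdd) := by
      simp [ofAdd_sub, div_eq_mul_inv]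
    rw [h, sqP_mult_iff, qm_sub, sub_eq_zero]
  have hcard : Fintype.card (Fin m → ZMod 2) = 2 ^ m := by
    simp [Fintype.card_fun, ZMod.card]
  let g : Fin (2 ^ m) ≃ (Fin m → ZMod 2) := (Fintype.equivFinOfCardEq hcard).symm
  have h1 : ∀ a : Fin (2 ^ m),
      qm (Multiplicative.toAdd (Multiplicative.ofAdd
        (fun i => (ZMod.cast (g a i) : ℤ)))) = g a := by
    intro a; funext i; simp [qm, ZMod.intCast_zmod_cast]
  refine ⟨fun a => Multiplicative.ofAdd (fun i => (ZMod.cast (g a i) : ℤ)), ?_, ?_⟩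
  · intro a c hac hsq'
    have h2 := (hsq _ _).mp hsq'
    rw [h1, h1] at h2
    exact hac (g.injective h2)
  · intro z
    refine ⟨g.symm (qm z.toAdd), ?_⟩
    rw [hsq, h1]
    simp

lemma covP_mult_iff (m k : ℕ) :
    CovP k (Multiplicative (Fin m → ℤ)) ↔ k = m := by
  have hsq : ∀ u v : Multiplicative (Fin m → ℤ),
      SqP (u * v⁻¹) ↔ qm u.toAdd = qm v.toAdd := by
    intro u v
    have : u * v⁻¹ = Multiplicative.ofAdd (u.toAdd - v.toAdd) := by
      simp [ofAdd_sub, div_eq_mul_inv]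
    rw [this, sqP_mult_iff, qm_sub, sub_eq_zero]
  constructor
  · rintro ⟨y, h1, h2⟩
    have hinj : Function.Injective (fun a => qm (y a).toAdd) := by
      intro a c hac
      by_contra hne
      exact h1 a c hne ((hsq _ _).mpr hac)
    have hsurj : Function.Surjective (fun a => qm (y a).toAdd) := by
      intro w
      obtain ⟨a, ha⟩ := h2 (Multiplicative.ofAdd (fun i => (ZMod.cast (w i) : ℤ)))
      refine ⟨a, ?_⟩
      have h3 := (hsq _ _).mp ha
      rw [toAdd_ofAdd] at h3
      show qm (Multiplicative.toAdd (y a)) = w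
      rw [← h3]
      funext i
      simp [qm, ZMod.intCast_zmod_cast]
    have hbij : Function.Bijective (fun a => qm (y a).toAdd) := ⟨hinj, hsurj⟩
    have hcard := Fintype.card_of_bijective hbij
    simp only [Fintype.card_fin, Fintype.card_fun, ZMod.card] at hcard
    exact Nat.pow_right_injective (le_refl 2) hcard
  · rintro rfl
    exact covP_self _


lemma exists_mulEquiv_int_pow (H : Type*) [Group H]
    (hcomm : ∀ a b : H, a * b = b * a)
    (htf : ∀ g : H, g ≠ 1 → ¬IsOfFinOrder g) (hfg : Group.FG H) :
    ∃ m : ℕ, Nonempty (H ≃* Multiplicative (Fin m → ℤ)) := by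
  letI : CommGroup H := { (inferInstance : Group H) with mul_comm := hcomm }
  letI : AddCommGroup (Additive H) := inferInstance
  haveI : AddGroup.FG (Additive H) := GroupFG.iff_add_fg.1 hfg
  haveI : Module.Finite ℤ (Additive H) := Module.Finite.iff_addGroup_fg.mpr inferInstance
  haveI : NoZeroSMulDivisors ℤ (Additive H) := by
    refine @IsAddTorsionFree.to_noZeroSMulDivisors_int _ _
      (isAddTorsionFree_iff_not_isOfFinAddOrder.mpr ?_)
    intro a ha hf
    exact htf (Additive.toMul a) ha (isOfFinAddOrder_ofMul_iff.mp hf)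
  haveI : Module.Free ℤ (Additive H) := Module.free_of_finite_type_torsion_free'
  let ι := Module.Free.ChooseBasisIndex ℤ (Additive H)
  let bH : Module.Basis ι ℤ (Additive H) := Module.Free.chooseBasis ℤ (Additive H)
  refine ⟨Fintype.card ι, ⟨?_⟩⟩
  let e1 : Additive H ≃ₗ[ℤ] (ι → ℤ) := bH.equivFun
  let e2 : (ι → ℤ) ≃ₗ[ℤ] (Fin (Fintype.card ι) → ℤ) :=
    LinearEquiv.funCongrLeft ℤ ℤ (Fintype.equivFin ι).symm
  let f : Additive H ≃+ (Fin (Fintype.card ι) → ℤ) := (e1.trans e2).toAddEquiv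
  exact
    { toFun := fun h => Multiplicative.ofAdd (f (Additive.ofMul h))
      invFun := fun x => Additive.toMul (f.symm (Multiplicative.toAdd x))
      left_inv := fun h => by simp
      right_inv := fun x => by simp
      map_mul' := fun a b => by
        show Multiplicative.ofAdd (f (Additive.ofMul (a * b))) = _
        rw [ofMul_mul, map_add, ofAdd_add] }


section CT

variable {G : Type*} [Group G]

lemma cent_comm (hct : ∀ x y z : G, y ≠ 1 → ⁅x, y⁆ = 1 → ⁅y, z⁆ = 1 → ⁅x, z⁆ = 1)
    {g : G} (hg : g ≠ 1) :
    ∀ x ∈ Subgroup.centralizer {g}, ∀ y ∈ Subgroup.centralizer {g}, x * y = y * x := by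
  intro x hx y hy
  rw [Subgroup.mem_centralizer_singleton_iff] at hx hy
  exact commutatorElement_eq_one_iff_mul_comm.mp
    (hct x g y hg (commutatorElement_eq_one_iff_mul_comm.mpr hx)
      (commutatorElement_eq_one_iff_mul_comm.mpr hy.symm))

lemma sq_mem (htf : (∀ g : G, g ≠ 1 → ¬IsOfFinOrder g))
    (hct : ∀ x y z : G, y ≠ 1 → ⁅x, y⁆ = 1 → ⁅y, z⁆ = 1 → ⁅x, z⁆ = 1)
    {g : G} (hg : g ≠ 1) {t : G} (ht : t * t ∈ Subgroup.centralizer {g}) :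
    t ∈ Subgroup.centralizer {g} := by
  by_cases htt : t * t = 1
  · have h1 : t = 1 := by
      by_contra h1
      exact htf t h1 (isOfFinOrder_iff_pow_eq_one.mpr ⟨2, two_pos, by rw [pow_two]; exact htt⟩)
    rw [h1]; exact one_mem _
  · rw [Subgroup.mem_centralizer_singleton_iff] at ht ⊢
    have h1 : ⁅t, t * t⁆ = 1 :=
      commutatorElement_eq_one_iff_mul_comm.mpr (by rw [mul_assoc])
    have h2 : ⁅t * t, g⁆ = 1 := commutatorElement_eq_one_iff_mul_comm.mpr ht
    exact commutatorElement_eq_one_iff_mul_comm.mp (hct t (t * t) g htt h1 h2)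

lemma sqP_coe (htf : (∀ g : G, g ≠ 1 → ¬IsOfFinOrder g))
    (hct : ∀ x y z : G, y ≠ 1 → ⁅x, y⁆ = 1 → ⁅y, z⁆ = 1 → ⁅x, z⁆ = 1)
    {g : G} (hg : g ≠ 1) (u : Subgroup.centralizer ({g} : Set G)) :
    SqP u ↔ SqP (u : G) := by
  constructor
  · rintro ⟨t, ht⟩
    exact ⟨(t : G), by exact_mod_cast congrArg Subtype.val ht⟩
  · rintro ⟨t, ht⟩
    exact ⟨⟨t, sq_mem htf hct hg (ht ▸ u.2)⟩, Subtype.ext ht⟩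

lemma rkPred_iff_covP (htf : (∀ g : G, g ≠ 1 → ¬IsOfFinOrder g))
    (hct : ∀ x y z : G, y ≠ 1 → ⁅x, y⁆ = 1 → ⁅y, z⁆ = 1 → ⁅x, z⁆ = 1)
    {g : G} (hg : g ≠ 1) (k : ℕ) :
    RkPred k g ↔ CovP k (Subgroup.centralizer ({g} : Set G)) := by
  constructor
  · rintro ⟨y, h1, h2, h3⟩
    have hy : ∀ a, y a ∈ Subgroup.centralizer ({g} : Set G) := fun a =>
      Subgroup.mem_centralizer_singleton_iff.mpr (h1 a)
    refine ⟨fun a => ⟨y a, hy a⟩, ?_, ?_⟩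
    · intro a c hac hsq
      refine h2 a c hac ?_
      rw [sqP_coe htf hct hg] at hsq
      exact hsq
    · intro z
      have hz : (z : G) * g = g * (z : G) :=
        Subgroup.mem_centralizer_singleton_iff.mp z.2
      obtain ⟨a, ha⟩ := h3 (z : G) hz
      refine ⟨a, (sqP_coe htf hct hg _).mpr ?_⟩
      exact ha
  · rintro ⟨y, h1, h2⟩
    refine ⟨fun a => (y a : G), fun a =>
      Subgroup.mem_centralizer_singleton_iff.mp (y a).2, ?_, ?_⟩
    · intro a c hac hsq
      refine h1 a c hac ?_
      rw [sqP_coe htf hct hg]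
      exact hsq
    · intro z hz
      obtain ⟨a, ha⟩ := h2 ⟨z, Subgroup.mem_centralizer_singleton_iff.mpr hz⟩
      refine ⟨a, ?_⟩
      rw [sqP_coe htf hct hg] at ha
      exact ha

lemma rkPred_iff_nonempty (htf : (∀ g : G, g ≠ 1 → ¬IsOfFinOrder g))
    (hct : ∀ x y z : G, y ≠ 1 → ⁅x, y⁆ = 1 → ⁅y, z⁆ = 1 → ⁅x, z⁆ = 1)
    (hfg : ∀ A : Subgroup G, (∀ a ∈ A, ∀ b ∈ A, a * b = b * a) → A.FG)
    {g : G} (hg : g ≠ 1) (k : ℕ) :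
    RkPred k g ↔
      Nonempty ((Subgroup.centralizer ({g} : Set G)) ≃* Multiplicative (Fin k → ℤ)) := by
  have hcomm := cent_comm hct hg
  have hcomm' : ∀ a b : Subgroup.centralizer ({g} : Set G), a * b = b * a := fun a b =>
    Subtype.ext (hcomm a a.2 b b.2)
  obtain ⟨m, ⟨e⟩⟩ := exists_mulEquiv_int_pow (Subgroup.centralizer ({g} : Set G)) hcomm'
    (fun x hx hfo => htf (x : G) (fun h => hx (Subtype.ext h))
      (isOfFinOrder_iff_pow_eq_one.mpr (by
        obtain ⟨n, hn, h⟩ := isOfFinOrder_iff_pow_eq_one.mp hfo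
        exact ⟨n, hn, by simpa using congrArg Subtype.val h⟩)))
    ((Group.fg_iff_subgroup_fg _).mpr (hfg _ hcomm))
  rw [rkPred_iff_covP htf hct hg, covP_congr e, covP_mult_iff]
  constructor
  · rintro rfl
    exact ⟨e⟩
  · rintro ⟨f⟩
    have h1 : CovP k (Subgroup.centralizer ({g} : Set G)) :=
      (covP_congr f k).mpr (covP_self k)
    exact (covP_mult_iff m k).mp ((covP_congr e k).mp h1)

end CT


noncomputable def epsF (n k : ℕ) (r : Fin k → ℕ)
    (b : ∀ i : Fin k, Fin (r i) → FreeGroup (Fin n)) : groupLang.Formula (Fin n) :=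
  BoundedFormula.iInf fun i =>
    (BoundedFormula.iSup fun j =>
      (FirstOrder.Language.Term.equal (wordTerm (b i j)) tOne).not) ⊓
    (BoundedFormula.iInf fun j =>
      (FirstOrder.Language.Term.equal (wordTerm (b i j)) tOne) ⊔
        rkF (r i) (wordTerm (b i j)))

section RealizeEps

open FirstOrder.Language

variable {α : Type*} {G : Type*} [Group G]

@[simp] lemma realize_equal' (v : α → G) (xs : Fin 0 → G) (t₁ t₂ : groupLang.Term α) :
    BoundedFormula.Realize (Term.equal t₁ t₂) v xs ↔ t₁.realize v = t₂.realize v := by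
  rw [Subsingleton.elim xs default]
  exact Formula.realize_equal

@[simp] lemma realize_rkF' (v : α → G) (xs : Fin 0 → G) (m : ℕ) (t : groupLang.Term α) :
    BoundedFormula.Realize (rkF m t) v xs ↔ RkPred m (t.realize v) := by
  rw [Subsingleton.elim xs default]
  exact realize_rkF v m t

lemma realize_epsF (n k : ℕ) (r : Fin k → ℕ)
    (b : ∀ i : Fin k, Fin (r i) → FreeGroup (Fin n)) (s : Fin n → G) :
    (epsF n k r b).Realize s ↔ ∀ i : Fin k,
      (∃ j : Fin (r i), FreeGroup.lift s (b i j) ≠ 1) ∧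
      (∀ j : Fin (r i), FreeGroup.lift s (b i j) = 1 ∨
        RkPred (r i) (FreeGroup.lift s (b i j))) := by
  simp only [epsF, Formula.Realize, BoundedFormula.realize_iInf, BoundedFormula.realize_inf,
    BoundedFormula.realize_iSup, BoundedFormula.realize_sup, BoundedFormula.realize_not,
    realize_equal', realize_rkF', realize_wordTerm, realize_tOne, Finset.mem_univ,
    forall_const, true_and]

end RealizeEps

end GrpFO

/-- Fix `n, k ≥ 1`, positive integers `r₁,…,r_k`, and words `b_{i,1},…,b_{i,rᵢ}` in the
free group on `n` generators.  Then there is a first-order formula `ε(x₁,…,xₙ)` such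
that for every torsion-free commutative-transitive group `G` whose abelian subgroups
are all finitely generated and every tuple `s ∈ Gⁿ`: `G ⊨ ε(s)` iff for each `i` some
`b_{i,j}(s) ≠ 1`, and for every `j` with `b_{i,j}(s) ≠ 1` the centralizer
`Z_G(b_{i,j}(s))` is free abelian of rank `rᵢ`. -/
theorem exists_formula_edge_ranks (n k : ℕ) (hn : 1 ≤ n) (hk : 1 ≤ k)
    (r : Fin k → ℕ) (hr : ∀ i, 1 ≤ r i)
    (b : ∀ i : Fin k, Fin (r i) → FreeGroup (Fin n)) :
    ∃ φ : groupLang.Formula (Fin n),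
      ∀ (G : Type*) [Group G],
        (∀ g : G, g ≠ 1 → ¬IsOfFinOrder g) →
        (∀ x y z : G, y ≠ 1 → ⁅x, y⁆ = 1 → ⁅y, z⁆ = 1 → ⁅x, z⁆ = 1) →
        (∀ A : Subgroup G, (∀ a ∈ A, ∀ b ∈ A, a * b = b * a) → A.FG) →
        ∀ s : Fin n → G,
          (φ.Realize s ↔
            ∀ i : Fin k,
              (∃ j : Fin (r i), FreeGroup.lift s (b i j) ≠ 1) ∧
              (∀ j : Fin (r i), FreeGroup.lift s (b i j) ≠ 1 →
                Nonempty ((Subgroup.centralizer {FreeGroup.lift s (b i j)})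
                  ≃* Multiplicative (Fin (r i) → ℤ)))) := by
  refine ⟨GrpFO.epsF n k r b, ?_⟩
  intro G _ htf hct hfg s
  rw [GrpFO.realize_epsF]
  refine forall_congr' fun i => and_congr Iff.rfl ?_
  constructor
  · intro h j hj
    rcases h j with h1 | h1
    · exact absurd h1 hj
    · exact (GrpFO.rkPred_iff_nonempty htf hct hfg hj (r i)).mp h1
  · intro h j
    by_cases hj : FreeGroup.lift s (b i j) = 1
    · exact Or.inl hj
    · exact Or.inr ((GrpFO.rkPred_iff_nonempty htf hct hfg hj (r i)).mpr (h j hj))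
end
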